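/- Let p be a prime, n = rk with r > 1, β ∈ F_{p^n}^*, γ ∈ F_{p^n}^*, and let f(x) = T^n_k(β·x^{p^i + p^j}) with i < j and j = i + kl for some 0 < l < r. Then f(x + uγ) − f(x) = T^n_k(β·(uγ)^{p^i + p^j}) holds for all x ∈ F_{p^n} and all u ∈ F_{p^k} if and only if β·γ^{p^{i+lk}} + β^{p^{(r−l)k}}·γ^{p^{i+(r−l)k}} = 0. In particular, when β ∈ F_{p^k}^*, this holds if and only if γ^{p^{2kl} − 1} = −1, which for p > 2 requires that r/gcd(r, 2l) be even. -/

import Mathlib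

/-- The relative trace map from `F_{p^n}` to the subfield `F_{p^k}`, where `n = r·k`:
`T^n_k(x) = x + x^{p^k} + ⋯ + x^{p^{(r-1)k}}`. -/
def traceMap (p k r : ℕ) {F : Type*} [Field F] (x : F) : F :=
  ∑ t ∈ Finset.range r, x ^ p ^ (k * t)

/-- The derivative of `f(x) = T^n_k(β·x^{p^i+p^j})` in direction `uγ` (for `u` in the
subfield `F_{p^k}`) is independent of `x`:
`f(x + uγ) − f(x) = T^n_k(β·(uγ)^{p^i+p^j})` for all `x ∈ F_{p^n}`, `u ∈ F_{p^k}`. -/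
def HasConstantDerivative (p k r i j : ℕ) {F : Type*} [Field F] (β γ : F) : Prop :=
  ∀ x u : F, u ^ p ^ k = u →
    traceMap p k r (β * (x + u * γ) ^ (p ^ i + p ^ j)) -
      traceMap p k r (β * x ^ (p ^ i + p ^ j)) =
      traceMap p k r (β * (u * γ) ^ (p ^ i + p ^ j))

namespace Stmt7Aux

variable {F : Type*} [Field F] {p : ℕ}

lemma fixpow {k : ℕ} {c : F} (hc : c ^ p ^ k = c) : ∀ t, c ^ p ^ (k * t) = c
  | 0 => by simp
  | t + 1 => by
      rw [Nat.mul_succ, pow_add, pow_mul, fixpow hc t, hc]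

lemma traceMap_add [ExpChar F p] {k r : ℕ} (a b : F) :
    traceMap p k r (a + b) = traceMap p k r a + traceMap p k r b := by
  simp only [traceMap, ← Finset.sum_add_distrib]
  exact Finset.sum_congr rfl fun t _ => add_pow_expChar_pow ..

lemma traceMap_zero [ExpChar F p] {k r : ℕ} : traceMap p k r (0 : F) = 0 := by
  unfold traceMap
  apply Finset.sum_eq_zero
  intro t _
  exact zero_pow (Nat.pow_pos (expChar_pos F p)).ne'

lemma traceMap_smul {k r : ℕ} {c : F} (hc : c ^ p ^ k = c) (a : F) :
    traceMap p k r (c * a) = c * traceMap p k r a := by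
  simp only [traceMap, Finset.mul_sum]
  refine Finset.sum_congr rfl fun t _ => ?_
  rw [mul_pow, fixpow hc t]

lemma traceMap_frob {k r : ℕ} (hone : ∀ x : F, x ^ p ^ (k * r) = x) (y : F) :
    traceMap p k r (y ^ p ^ k) = traceMap p k r y := by
  unfold traceMap
  have hterm : ∀ t, (y ^ p ^ k) ^ p ^ (k * t) = y ^ p ^ (k * (t + 1)) := by
    intro t
    rw [← pow_mul, ← pow_add, show k + k * t = k * (t + 1) from by ring]
  calc ∑ t ∈ Finset.range r, (y ^ p ^ k) ^ p ^ (k * t)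
      = ∑ t ∈ Finset.range r, y ^ p ^ (k * (t + 1)) :=
        Finset.sum_congr rfl fun t _ => hterm t
    _ = ∑ t ∈ Finset.range r, y ^ p ^ (k * t) := by
        have h1 := Finset.sum_range_succ' (fun t => y ^ p ^ (k * t)) r
        have h2 := Finset.sum_range_succ (fun t => y ^ p ^ (k * t)) r
        have h3 : y ^ p ^ (k * r) = y ^ p ^ (k * 0) := by
          rw [hone y]; simp
        have h4 : (∑ t ∈ Finset.range r, y ^ p ^ (k * (t + 1))) + y ^ p ^ (k * 0)
            = (∑ t ∈ Finset.range r, y ^ p ^ (k * t)) + y ^ p ^ (k * r) := by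
          rw [← h1, ← h2]
        rw [h3] at h4
        exact add_right_cancel h4

lemma traceMap_frob_iter {k r : ℕ} (hone : ∀ x : F, x ^ p ^ (k * r) = x) :
    ∀ (m : ℕ) (y : F), traceMap p k r (y ^ p ^ (k * m)) = traceMap p k r y := by
  intro m
  induction m with
  | zero => intro y; simp
  | succ m ih =>
      intro y
      rw [show k * (m + 1) = k * m + k from by ring, pow_add, pow_mul]
      rw [traceMap_frob hone, ih y]

end Stmt7Aux

open Stmt7Aux in
/-- **Lemma 3.6.** Let `n = rk` with `r > 1`, `f(x) = T^n_k(β·x^{p^i+p^j})` with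
`i < j` and `j = i + kl`, `0 < l < r`, and `β, γ ∈ F_{p^n}^*`.  Then
`f(x + uγ) − f(x) = T^n_k(β·(uγ)^{p^i+p^j})` for all `x, u` iff
`β·γ^{p^{i+lk}} + β^{p^{(r−l)k}}·γ^{p^{i+(r−l)k}} = 0`.  In particular, if
`β ∈ F_{p^k}^*` this holds iff `γ^{p^{2kl}−1} = −1`, which for `p > 2` requires
`r / gcd(r, 2l)` to be even. -/
theorem stmt_7 {p k r n l i j : ℕ} (hp : p.Prime) (hk : 0 < k) (hr : 1 < r)
    (hn : n = r * k) (hl : 0 < l) (hlr : l < r) (hij : i < j) (hj : j = i + k * l)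
    {F : Type*} [Field F] [Fintype F] (hcard : Fintype.card F = p ^ n)
    (β γ : F) (hβ : β ≠ 0) (hγ : γ ≠ 0) :
    (HasConstantDerivative p k r i j β γ ↔
      β * γ ^ p ^ (i + l * k) +
        β ^ p ^ ((r - l) * k) * γ ^ p ^ (i + (r - l) * k) = 0) ∧
    (β ^ p ^ k = β →
      (HasConstantDerivative p k r i j β γ ↔
          γ ^ (p ^ (2 * k * l) - 1) = -1) ∧
        (2 < p → γ ^ (p ^ (2 * k * l) - 1) = -1 →
          Even (r / Nat.gcd r (2 * l)))) := by
  haveI hFact : Fact p.Prime := ⟨hp⟩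
  have hn0 : 0 < n := by
    rw [hn]; exact Nat.mul_pos (by omega) hk
  -- characteristic
  haveI : CharP F (ringChar F) := ringChar.charP F
  haveI hchar : CharP F p := by
    obtain ⟨m, hq, hc⟩ := FiniteField.card F (ringChar F)
    have hdvd : p ∣ ringChar F ^ (m : ℕ) := by
      rw [← hc, hcard]; exact dvd_pow_self p hn0.ne'
    have hpq : p = ringChar F :=
      (Nat.prime_dvd_prime_iff_eq hp hq).mp (hp.dvd_of_dvd_pow hdvd)
    rw [hpq]; exact ringChar.charP F
  haveI hexp : ExpChar F p := ExpChar.prime hp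
  have hone : ∀ x : F, x ^ p ^ n = x := by
    intro x
    have := FiniteField.pow_card x
    rwa [hcard] at this
  have hone' : ∀ x : F, x ^ p ^ (k * r) = x := by
    intro x
    rw [show k * r = n from by rw [hn, Nat.mul_comm]]
    exact hone x
  have hred : ∀ (x : F) (m c : ℕ), x ^ p ^ (m + n * c) = x ^ p ^ m := by
    intro x m c
    induction c with
    | zero => simp
    | succ c ih =>
        rw [Nat.mul_succ, ← Nat.add_assoc, pow_add, pow_mul, hone, ih]
  -- arithmetic facts used by omega (products appear as atoms)
  have c1 : k * l = l * k := Nat.mul_comm k l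
  have c2 : (r - l) * k = r * k - l * k := Nat.sub_mul r l k
  have c3 : l * k ≤ r * k := Nat.mul_le_mul_right k hlr.le
  have c4 : 2 * k * l = l * k + l * k := by ring
  have c5 : i + 1 ≤ n * (i + 1) := Nat.le_mul_of_pos_left (i + 1) hn0
  have c6 : n * (i + 2) = n * (i + 1) + n := by ring
  set A := β * γ ^ p ^ (i + l * k) +
      β ^ p ^ ((r - l) * k) * γ ^ p ^ (i + (r - l) * k) with hAdef
  -- the fundamental identity
  have M : ∀ x u : F, u ^ p ^ k = u →
      traceMap p k r (β * (x + u * γ) ^ (p ^ i + p ^ j)) -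
        traceMap p k r (β * x ^ (p ^ i + p ^ j)) -
        traceMap p k r (β * (u * γ) ^ (p ^ i + p ^ j)) =
        u ^ p ^ i * traceMap p k r (A * x ^ p ^ i) := by
    intro x u hu
    have huj : u ^ p ^ j = u ^ p ^ i := by
      rw [hj, show i + k * l = k * l + i from by omega, pow_add, pow_mul, fixpow hu l]
    have hui : (u ^ p ^ i) ^ p ^ k = u ^ p ^ i := by
      rw [← pow_mul, Nat.mul_comm (p ^ i) (p ^ k), pow_mul, hu]
    have h1 : β * (x + u * γ) ^ (p ^ i + p ^ j)
        = (β * x ^ (p ^ i + p ^ j) + β * (u * γ) ^ (p ^ i + p ^ j))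
          + (u ^ p ^ i * (β * γ ^ p ^ j * x ^ p ^ i)
            + u ^ p ^ i * (β * γ ^ p ^ i * x ^ p ^ j)) := by
      simp only [pow_add, add_pow_expChar_pow, mul_pow, huj]
      ring
    have hTsplit : traceMap p k r (β * (x + u * γ) ^ (p ^ i + p ^ j)) =
        traceMap p k r (β * x ^ (p ^ i + p ^ j)) +
          traceMap p k r (β * (u * γ) ^ (p ^ i + p ^ j)) +
          (u ^ p ^ i * traceMap p k r (β * γ ^ p ^ j * x ^ p ^ i) +
            u ^ p ^ i * traceMap p k r (β * γ ^ p ^ i * x ^ p ^ j)) := by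
      rw [h1, traceMap_add, traceMap_add, traceMap_add,
        traceMap_smul hui, traceMap_smul hui]
    have hlast : traceMap p k r (β * γ ^ p ^ i * x ^ p ^ j)
        = traceMap p k r
            (β ^ p ^ ((r - l) * k) * γ ^ p ^ (i + (r - l) * k) * x ^ p ^ i) := by
      have h2 := traceMap_frob_iter (p := p) hone' (r - l) (β * γ ^ p ^ i * x ^ p ^ j)
      rw [← h2]
      congr 1
      rw [mul_pow, mul_pow, ← pow_mul, ← pow_mul, ← pow_add, ← pow_add,
        show k * (r - l) = (r - l) * k from Nat.mul_comm k (r - l),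
        show j + (r - l) * k = i + n * 1 from by omega, hred]
    have hexpj : j = i + l * k := by omega
    have hcomb : traceMap p k r (β * γ ^ p ^ j * x ^ p ^ i) +
        traceMap p k r
          (β ^ p ^ ((r - l) * k) * γ ^ p ^ (i + (r - l) * k) * x ^ p ^ i)
        = traceMap p k r (A * x ^ p ^ i) := by
      rw [← traceMap_add]
      congr 1
      rw [hAdef, hexpj]
      ring
    linear_combination hTsplit + u ^ p ^ i * hlast + u ^ p ^ i * hcomb
  -- surjectivity of x ↦ x^{p^i}
  have hsurj : ∀ z : F, ∃ x : F, x ^ p ^ i = z := by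
    have hinj : Function.Injective fun x : F => x ^ p ^ i := by
      intro a b hab
      exact (iterateFrobenius F p i).injective hab
    intro z
    exact Finite.surjective_of_injective hinj z
  -- the trace map is not identically zero
  have hTne : ∃ z : F, traceMap p k r z ≠ 0 := by
    by_contra hc
    push_neg at hc
    set P : Polynomial F := ∑ t ∈ Finset.range r, Polynomial.X ^ p ^ (k * t) with hP
    have heval : ∀ z : F, P.eval z = 0 := by
      intro z
      have : P.eval z = traceMap p k r z := by
        rw [hP]
        simp [traceMap, Polynomial.eval_finset_sum]
      rw [this]
      exact hc z
    have hdeg : P.natDegree < Fintype.card F := by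
      have h1 : P.natDegree ≤ p ^ (k * (r - 1)) := by
        rw [hP]
        apply Polynomial.natDegree_sum_le_of_forall_le
        intro t ht
        rw [Finset.mem_range] at ht
        rw [Polynomial.natDegree_X_pow]
        exact Nat.pow_le_pow_right hp.pos
          (Nat.mul_le_mul_left k (by omega : t ≤ r - 1))
      have h2 : p ^ (k * (r - 1)) < p ^ n := by
        apply Nat.pow_lt_pow_right hp.one_lt
        have e4 : k * (r - 1) + k = k * r := by
          rw [← Nat.mul_succ]
          congr 1
          omega
        have e2 : k * r = r * k := Nat.mul_comm k r
        omega
      rw [hcard]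
      omega
    have hP0 : P = 0 :=
      Polynomial.eq_zero_of_natDegree_lt_card_of_eval_eq_zero P
        Function.injective_id (fun z => heval z) hdeg
    have hco : P.coeff 1 = 1 := by
      rw [hP, Polynomial.finset_sum_coeff]
      rw [Finset.sum_eq_single 0]
      · simp
      · intro t ht hne
        rw [Polynomial.coeff_X_pow, if_neg]
        have h1lt : 1 < p ^ (k * t) :=
          Nat.one_lt_pow (Nat.mul_ne_zero hk.ne' hne) hp.one_lt
        omega
      · intro h
        exact absurd (Finset.mem_range.mpr (by omega : 0 < r)) h
    rw [hP0] at hco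
    simp at hco
  have key : (∀ z : F, traceMap p k r (A * z) = 0) → A = 0 := by
    intro h
    by_contra hA
    obtain ⟨z, hz⟩ := hTne
    have := h (A⁻¹ * z)
    rw [← mul_assoc, mul_inv_cancel₀ hA, one_mul] at this
    exact hz this
  have main_iff : HasConstantDerivative p k r i j β γ ↔ A = 0 := by
    constructor
    · intro hcd
      apply key
      intro z
      obtain ⟨x, hx⟩ := hsurj z
      rw [← hx]
      have h1 := hcd x 1 (one_pow _)
      have h2 := M x 1 (one_pow _)
      simp only [one_pow, one_mul] at h1 h2
      linear_combination h1 - h2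
    · intro hA0 x u hu
      have h2 := M x u hu
      rw [hA0, zero_mul, traceMap_zero, mul_zero] at h2
      linear_combination h2
  refine ⟨main_iff, ?_⟩
  intro hβk
  have hβfix : β ^ p ^ ((r - l) * k) = β := by
    rw [show (r - l) * k = k * (r - l) from Nat.mul_comm _ _]
    exact fixpow hβk (r - l)
  have hE3 : γ ^ p ^ (2 * k * l) = γ ^ (p ^ (2 * k * l) - 1) * γ := by
    rw [← pow_succ]
    congr 1
    have h1 : 1 ≤ p ^ (2 * k * l) := Nat.one_le_pow _ _ hp.pos
    omega
  have hiff2 : A = 0 ↔ γ ^ (p ^ (2 * k * l) - 1) = -1 := by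
    rw [hAdef, hβfix]
    constructor
    · intro h
      have hfac : β * (γ ^ p ^ (i + l * k) + γ ^ p ^ (i + (r - l) * k)) = 0 := by
        linear_combination h
      have hsum : γ ^ p ^ (i + l * k) + γ ^ p ^ (i + (r - l) * k) = 0 := by
        rcases mul_eq_zero.mp hfac with h' | h'
        · exact absurd h' hβ
        · exact h'
      have h2 := congrArg (iterateFrobenius F p (l * k + n * (i + 1) - i)) hsum
      simp only [map_add, map_zero, iterateFrobenius_def] at h2
      rw [← pow_mul, ← pow_mul, ← pow_add, ← pow_add] at h2
      rw [show i + l * k + (l * k + n * (i + 1) - i) = 2 * k * l + n * (i + 1) from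
          by omega,
        show i + (r - l) * k + (l * k + n * (i + 1) - i) = 0 + n * (i + 2) from
          by omega,
        hred, hred] at h2
      rw [pow_zero, pow_one] at h2
      have h3 : γ ^ (p ^ (2 * k * l) - 1) * γ = (-1) * γ := by
        rw [← hE3]
        linear_combination h2
      exact mul_right_cancel₀ hγ h3
    · intro h
      have hq : γ ^ p ^ (2 * k * l) = -γ := by
        rw [hE3, h]; ring
      have h2 := congrArg (iterateFrobenius F p (i + (r - l) * k)) hq
      simp only [iterateFrobenius_def, map_neg] at h2
      rw [← pow_mul, ← pow_add] at h2
      rw [show 2 * k * l + (i + (r - l) * k) = (i + l * k) + n * 1 from by omega,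
        hred] at h2
      linear_combination β * h2
  refine ⟨main_iff.trans hiff2, ?_⟩
  intro hp2 hγq
  have hq : γ ^ p ^ (2 * k * l) = -γ := by
    rw [hE3, hγq]; ring
  have hneg1 : ((-1 : F)) ^ p ^ (2 * k * l) = -1 := by
    have := map_neg (iterateFrobenius F p (2 * k * l)) 1
    simpa [iterateFrobenius_def] using this
  have iter : ∀ t : ℕ, γ ^ p ^ (2 * k * l * t) = (-1 : F) ^ t * γ := by
    intro t
    induction t with
    | zero => simp
    | succ t ih =>
        have h2 := congrArg (iterateFrobenius F p (2 * k * l)) ih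
        simp only [iterateFrobenius_def] at h2
        rw [← pow_mul, ← pow_add,
          show 2 * k * l * t + 2 * k * l = 2 * k * l * (t + 1) from by ring] at h2
        rw [h2, mul_pow, ← pow_mul, Nat.mul_comm t (p ^ (2 * k * l)), pow_mul,
          hneg1, hq]
        ring
  have hgpos : 0 < Nat.gcd r (2 * l) := Nat.gcd_pos_of_pos_left _ (by omega)
  obtain ⟨a, ha⟩ := Nat.gcd_dvd_left r (2 * l)
  obtain ⟨b, hb⟩ := Nat.gcd_dvd_right r (2 * l)
  have hma : r / Nat.gcd r (2 * l) = a := Nat.div_eq_of_eq_mul_right hgpos ha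
  have hQm : 2 * k * l * (r / Nat.gcd r (2 * l)) = 0 + n * b := by
    rw [hma, hn]
    calc 2 * k * l * a = (2 * l) * (k * a) := by ring
      _ = (Nat.gcd r (2 * l) * b) * (k * a) := by rw [← hb]
      _ = (Nat.gcd r (2 * l) * a) * k * b := by ring
      _ = r * k * b := by rw [← ha]
      _ = 0 + r * k * b := by ring
  have hgm := iter (r / Nat.gcd r (2 * l))
  rw [hQm, hred] at hgm
  rw [pow_zero, pow_one] at hgm
  rcases Nat.even_or_odd (r / Nat.gcd r (2 * l)) with he | ho
  · exact he
  · exfalso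
    rw [ho.neg_one_pow] at hgm
    have h2γ : (2 : F) * γ = 0 := by linear_combination hgm
    have h2 : (2 : F) ≠ 0 := by
      intro h
      have hd : (p : ℕ) ∣ 2 := (CharP.cast_eq_zero_iff F p 2).mp (by exact_mod_cast h)
      have := Nat.le_of_dvd (by norm_num) hd
      omega
    rcases mul_eq_zero.mp h2γ with h | h
    · exact h2 h
    · exact hγ h
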